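/- Let S be an inverse semigroup with finitely many idempotents and T an inverse subsemigroup of S. Then T is finitely generated if and only if for every 𝒥-class J of S that meets T in a nonempty set, the inverse semigroup T_J is finitely generated, where T_J = T ∩ J if J is a subgroup of S, and otherwise T_J = (T ∩ J) ∪ {0} regarded as an inverse subsemigroup of the principal factor PF(J). -/

import Mathlib

inductive InvGen {S : Type*} [Mul S] [Inv S] (X : Set S) : S → Prop
  | base {x : S} : x ∈ X → InvGen X x
  | mul {a b : S} : InvGen X a → InvGen X b → InvGen X (a * b)
  | inv {a : S} : InvGen X a → InvGen X a⁻¹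

def IsInvSub {S : Type*} [Mul S] [Inv S] (T : Set S) : Prop :=
  (∀ a ∈ T, ∀ b ∈ T, a * b ∈ T) ∧ ∀ a ∈ T, a⁻¹ ∈ T

def InvFG {S : Type*} [Mul S] [Inv S] (T : Set S) : Prop :=
  ∃ X : Finset S, ↑X ⊆ T ∧ T = {s | InvGen (↑X : Set S) s}

def Howson (S : Type*) [Mul S] [Inv S] : Prop :=
  ∀ U V : Set S, IsInvSub U → IsInvSub V → InvFG U → InvFG V → InvFG (U ∩ V)
class InverseSemigroup (S : Type*) extends Semigroup S, Inv S where
  mul_inv_mul : ∀ a : S, a * a⁻¹ * a = a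
  inv_invol : ∀ a : S, a⁻¹⁻¹ = a
  idem_comm : ∀ a b : S, (a * a⁻¹) * (b * b⁻¹) = (b * b⁻¹) * (a * a⁻¹)

def Idl {S : Type*} [Semigroup S] (a : S) : Set S :=
  {a} ∪ {x | ∃ s, s * a = x} ∪ {x | ∃ s, a * s = x} ∪ {x | ∃ s t, s * a * t = x}

def Jrel {S : Type*} [Semigroup S] (a b : S) : Prop := Idl a = Idl b

def Jcl {S : Type*} [Semigroup S] (a : S) : Set S := {b | Jrel a b}

/-- The principal factor `PF(J)` for the `𝒥`-class `J`, regarded as `J ∪ {0}`. -/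
def PF {S : Type*} (J : Set S) := Option ↥J

open Classical in
noncomputable instance {S : Type*} [InverseSemigroup S] (J : Set S) : Mul (PF J) :=
  ⟨fun a b =>
    match a, b with
    | some x, some y => if h : (x : S) * y ∈ J then (some ⟨(x : S) * y, h⟩ : Option ↥J) else none
    | _, _ => none⟩

open Classical in
noncomputable instance {S : Type*} [InverseSemigroup S] (J : Set S) : Inv (PF J) :=
  ⟨fun a =>
    match a with
    | some x => if h : (x : S)⁻¹ ∈ J then (some ⟨(x : S)⁻¹, h⟩ : Option ↥J) else none
    | none => none⟩

/-- `T_J = (T ∩ J) ∪ {0}` as a subset of the principal factor `PF(J)`. -/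
def TJ {S : Type*} [InverseSemigroup S] (J : Set S) (T : Set S) : Set (PF J) :=
  {p | p = (none : Option ↥J) ∨ ∃ x : ↥J, (x : S) ∈ T ∧ p = some x}

section Basics
variable {S : Type*} [InverseSemigroup S]

lemma is_mim (a : S) : a * a⁻¹ * a = a := InverseSemigroup.mul_inv_mul a
lemma is_inv_inv (a : S) : a⁻¹⁻¹ = a := InverseSemigroup.inv_invol a
lemma is_comm (a b : S) : (a * a⁻¹) * (b * b⁻¹) = (b * b⁻¹) * (a * a⁻¹) :=
  InverseSemigroup.idem_comm a b

lemma is_imi (a : S) : a⁻¹ * a * a⁻¹ = a⁻¹ := by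
  have := is_mim a⁻¹; rwa [is_inv_inv] at this

lemma is_comm' (a b : S) : (a * a⁻¹) * (b⁻¹ * b) = (b⁻¹ * b) * (a * a⁻¹) := by
  have := is_comm a b⁻¹; rwa [is_inv_inv] at this

lemma is_comm'' (a b : S) : (a⁻¹ * a) * (b⁻¹ * b) = (b⁻¹ * b) * (a⁻¹ * a) := by
  have := is_comm a⁻¹ b⁻¹; rwa [is_inv_inv, is_inv_inv] at this

lemma idem_mul_inv (a : S) : (a * a⁻¹) * (a * a⁻¹) = a * a⁻¹ := by
  rw [← mul_assoc, is_mim]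

lemma idem_inv_mul (a : S) : (a⁻¹ * a) * (a⁻¹ * a) = a⁻¹ * a := by
  rw [← mul_assoc, is_imi]

/-- for an idempotent `e`, `e⁻¹ = (e * e⁻¹) * (e⁻¹ * e)`. -/
private lemma inv_idem_aux {e : S} (he : e * e = e) :
    e⁻¹ = (e * e⁻¹) * (e⁻¹ * e) := by
  have h1 : (e⁻¹ * e) * (e * e⁻¹) = e⁻¹ := by
    calc (e⁻¹ * e) * (e * e⁻¹) = e⁻¹ * (e * e) * e⁻¹ := by
          simp only [mul_assoc]
      _ = e⁻¹ * e * e⁻¹ := by rw [he]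
      _ = e⁻¹ := is_imi e
  have h2 : (e * e⁻¹) * (e⁻¹ * e) = (e⁻¹ * e) * (e * e⁻¹) := is_comm' e e
  rw [h2, h1]

private lemma inv_idem_idem {e : S} (he : e * e = e) : e⁻¹ * e⁻¹ = e⁻¹ := by
  have h := inv_idem_aux he
  have hf := idem_mul_inv e
  have hg := idem_inv_mul e
  have hcomm := is_comm' e e
  calc e⁻¹ * e⁻¹ = ((e * e⁻¹) * (e⁻¹ * e)) * ((e * e⁻¹) * (e⁻¹ * e)) := by rw [← h]
    _ = (e * e⁻¹) * (((e⁻¹ * e) * (e * e⁻¹)) * (e⁻¹ * e)) := by simp only [mul_assoc]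
    _ = (e * e⁻¹) * (((e * e⁻¹) * (e⁻¹ * e)) * (e⁻¹ * e)) := by rw [← hcomm]
    _ = ((e * e⁻¹) * (e * e⁻¹)) * ((e⁻¹ * e) * (e⁻¹ * e)) := by simp only [mul_assoc]
    _ = (e * e⁻¹) * (e⁻¹ * e) := by rw [hf, hg]
    _ = e⁻¹ := h.symm

lemma inv_idem {e : S} (he : e * e = e) : e⁻¹ = e := by
  have h1 := inv_idem_aux he
  have h2 := inv_idem_aux (inv_idem_idem he)
  rw [is_inv_inv] at h2
  -- h2 : e = (e⁻¹ * e) * (e * e⁻¹)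
  calc e⁻¹ = (e * e⁻¹) * (e⁻¹ * e) := h1
    _ = (e⁻¹ * e) * (e * e⁻¹) := is_comm' e e
    _ = e := h2.symm

lemma idem_comm_all {e f : S} (he : e * e = e) (hf : f * f = f) :
    e * f = f * e := by
  have := is_comm e f
  rwa [inv_idem he, inv_idem hf, he, hf] at this

lemma inverse_unique {c x y : S} (hxcx : x * c * x = x) (hcxc : c * x * c = c)
    (hycy : y * c * y = y) (hcyc : c * y * c = c) : x = y := by
  have hxc : (x * c) * (x * c) = x * c := by
    calc (x * c) * (x * c) = (x * c * x) * c := by simp only [mul_assoc]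
      _ = x * c := by rw [hxcx]
  have hyc : (y * c) * (y * c) = y * c := by
    calc (y * c) * (y * c) = (y * c * y) * c := by simp only [mul_assoc]
      _ = y * c := by rw [hycy]
  have hcx : (c * x) * (c * x) = c * x := by
    calc (c * x) * (c * x) = (c * x * c) * x := by simp only [mul_assoc]
      _ = c * x := by rw [hcxc]
  have hcy : (c * y) * (c * y) = c * y := by
    calc (c * y) * (c * y) = (c * y * c) * y := by simp only [mul_assoc]
      _ = c * y := by rw [hcyc]
  have hx_eq : x = y * c * x := by
    calc x = x * c * x := hxcx.symm
      _ = x * (c * y * c) * x := by rw [hcyc]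
      _ = ((x * c) * (y * c)) * x := by simp only [mul_assoc]
      _ = ((y * c) * (x * c)) * x := by rw [idem_comm_all hxc hyc]
      _ = y * (c * x * c) * x := by simp only [mul_assoc]
      _ = y * c * x := by rw [hcxc]
  have hy_eq : y = y * c * x := by
    calc y = y * c * y := hycy.symm
      _ = y * (c * x * c) * y := by rw [hcxc]
      _ = y * ((c * x) * (c * y)) := by simp only [mul_assoc]
      _ = y * ((c * y) * (c * x)) := by rw [idem_comm_all hcx hcy]
      _ = (y * c * y) * (c * x) := by simp only [mul_assoc]
      _ = (y * c) * x := by rw [hycy, mul_assoc]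
  rw [hx_eq, ← hy_eq]

lemma is_mul_inv_rev (a b : S) : (a * b)⁻¹ = b⁻¹ * a⁻¹ := by
  have hcore : (b * b⁻¹) * (a⁻¹ * a) = (a⁻¹ * a) * (b * b⁻¹) := is_comm' b a
  have hcyc : (a * b) * (b⁻¹ * a⁻¹) * (a * b) = a * b := by
    calc (a * b) * (b⁻¹ * a⁻¹) * (a * b)
        = a * ((b * b⁻¹) * (a⁻¹ * a)) * b := by simp only [mul_assoc]
      _ = a * ((a⁻¹ * a) * (b * b⁻¹)) * b := by rw [hcore]
      _ = (a * (a⁻¹ * a)) * ((b * b⁻¹) * b) := by simp only [mul_assoc]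
      _ = a * b := by rw [← mul_assoc a, is_mim, is_mim]
  have hycy : (b⁻¹ * a⁻¹) * (a * b) * (b⁻¹ * a⁻¹) = b⁻¹ * a⁻¹ := by
    calc (b⁻¹ * a⁻¹) * (a * b) * (b⁻¹ * a⁻¹)
        = b⁻¹ * ((a⁻¹ * a) * (b * b⁻¹)) * a⁻¹ := by simp only [mul_assoc]
      _ = b⁻¹ * ((b * b⁻¹) * (a⁻¹ * a)) * a⁻¹ := by rw [← hcore]
      _ = (b⁻¹ * (b * b⁻¹)) * ((a⁻¹ * a) * a⁻¹) := by simp only [mul_assoc]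
      _ = b⁻¹ * a⁻¹ := by rw [← mul_assoc b⁻¹, is_imi, is_imi]
  have hxcx : (a * b)⁻¹ * (a * b) * (a * b)⁻¹ = (a * b)⁻¹ := is_imi (a * b)
  have hcxc : (a * b) * (a * b)⁻¹ * (a * b) = a * b := is_mim (a * b)
  exact inverse_unique hxcx hcxc hycy hcyc

end Basics


section Ideals
variable {S : Type*} [InverseSemigroup S]

lemma mem_Idl_iff {a x : S} : x ∈ Idl a ↔ ∃ s t, s * a * t = x := by
  constructor
  · rintro (((h | ⟨s, rfl⟩) | ⟨s, rfl⟩) | ⟨s, t, rfl⟩)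
    · rcases h with rfl
      exact ⟨x * x⁻¹, x⁻¹ * x, by rw [is_mim, ← mul_assoc, is_mim]⟩
    · exact ⟨s, a⁻¹ * a, by rw [mul_assoc, ← mul_assoc a, is_mim]⟩
    · exact ⟨a * a⁻¹, s, by rw [is_mim]⟩
    · exact ⟨s, t, rfl⟩
  · rintro ⟨s, t, rfl⟩
    exact Or.inr ⟨s, t, rfl⟩

lemma self_mem_Idl (a : S) : a ∈ Idl a := Or.inl (Or.inl (Or.inl rfl))

lemma Idl_subset {x y : S} (h : x ∈ Idl y) : Idl x ⊆ Idl y := by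
  rw [mem_Idl_iff] at h
  obtain ⟨s, t, rfl⟩ := h
  intro z hz
  rw [mem_Idl_iff] at hz ⊢
  obtain ⟨u, v, rfl⟩ := hz
  exact ⟨u * s, t * v, by simp only [mul_assoc]⟩

lemma mul_mem_Idl_left (a b : S) : a * b ∈ Idl a :=
  mem_Idl_iff.2 ⟨a * a⁻¹, b, by rw [is_mim]⟩

lemma mul_mem_Idl_right (a b : S) : a * b ∈ Idl b :=
  mem_Idl_iff.2 ⟨a, b⁻¹ * b, by rw [mul_assoc, ← mul_assoc b, is_mim]⟩

lemma inv_mem_Idl (a : S) : a⁻¹ ∈ Idl a :=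
  mem_Idl_iff.2 ⟨a⁻¹, a⁻¹, is_imi a⟩

lemma jrel_iff {a b : S} : Jrel a b ↔ a ∈ Idl b ∧ b ∈ Idl a := by
  constructor
  · intro h
    exact ⟨h ▸ self_mem_Idl a, h.symm ▸ self_mem_Idl b⟩
  · rintro ⟨h1, h2⟩
    exact Set.Subset.antisymm (Idl_subset h1) (Idl_subset h2)

lemma jrel_refl (a : S) : Jrel a a := rfl

lemma self_mem_Jcl (a : S) : a ∈ Jcl a := rfl

lemma jrel_inv (a : S) : Jrel a a⁻¹ :=
  jrel_iff.2 ⟨by have := inv_mem_Idl a⁻¹; rwa [is_inv_inv] at this, inv_mem_Idl a⟩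

lemma jrel_mul_inv (a : S) : Jrel a (a * a⁻¹) := by
  refine jrel_iff.2 ⟨?_, mul_mem_Idl_left a a⁻¹⟩
  exact mem_Idl_iff.2 ⟨a * a⁻¹, a, by rw [idem_mul_inv, is_mim]⟩

lemma Jcl_congr {a b : S} (h : Jrel a b) : Jcl a = Jcl b := by
  ext x
  show Jrel a x ↔ Jrel b x
  unfold Jrel at *
  rw [h]

lemma mem_Jcl_of_Idl_eq {a v w : S} (hv : v ∈ Jcl a) (h : Idl v = Idl w) : w ∈ Jcl a := by
  have : Jrel a v := hv
  show Jrel a w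
  unfold Jrel at *
  rw [this, h]

lemma mem_Jcl_sandwich {a u v w : S} (hu : u ∈ Jcl a) (hv : v ∈ Jcl a)
    (h1 : Idl v ⊆ Idl w) (h2 : Idl w ⊆ Idl u) : w ∈ Jcl a := by
  have hu' : Jrel a u := hu
  have hv' : Jrel a v := hv
  unfold Jrel at hu' hv'
  show Jrel a w
  unfold Jrel
  exact Set.Subset.antisymm (by rw [hv']; exact h1) (by rw [hu']; exact h2)

end Ideals



section InvGenLemmas
variable {M : Type*} [Mul M] [Inv M]

lemma invGen_mono {X Y : Set M} (h : X ⊆ Y) {t : M} (hg : InvGen X t) : InvGen Y t := by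
  induction hg with
  | base hx => exact .base (h hx)
  | mul _ _ ia ib => exact .mul ia ib
  | inv _ ia => exact .inv ia

lemma invGen_mem {X T : Set M} (hT : IsInvSub T) (h : X ⊆ T) {t : M}
    (hg : InvGen X t) : t ∈ T := by
  induction hg with
  | base hx => exact h hx
  | mul _ _ ia ib => exact hT.1 _ ia _ ib
  | inv _ ia => exact hT.2 _ ia

end InvGenLemmas

section Words
variable {S : Type*} [InverseSemigroup S]

lemma foldl_mul_assoc (l : List S) (a b : S) :
    l.foldl (· * ·) (a * b) = a * l.foldl (· * ·) b := by
  induction l generalizing b with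
  | nil => rfl
  | cons c l ih =>
      show l.foldl (· * ·) (a * b * c) = a * l.foldl (· * ·) (b * c)
      rw [mul_assoc]
      exact ih (b * c)

lemma foldl_append_mul (x y : S) (l₁ l₂ : List S) :
    (l₁ ++ y :: l₂).foldl (· * ·) x = l₁.foldl (· * ·) x * l₂.foldl (· * ·) y := by
  rw [List.foldl_append]
  show l₂.foldl (· * ·) (l₁.foldl (· * ·) x * y) = _
  exact foldl_mul_assoc l₂ _ y

lemma foldl_mem_Idl (l : List S) (a : S) : l.foldl (· * ·) a ∈ Idl a := by
  induction l generalizing a with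
  | nil => exact self_mem_Idl a
  | cons c l ih =>
      show l.foldl (· * ·) (a * c) ∈ Idl a
      exact Idl_subset (mul_mem_Idl_left a c) (ih (a * c))

lemma mem_Xi_inv {X : Set S} {x : S} (h : x ∈ X ∪ Inv.inv '' X) :
    x⁻¹ ∈ X ∪ Inv.inv '' X := by
  rcases h with h | ⟨y, hy, rfl⟩
  · exact Or.inr ⟨x, h, rfl⟩
  · exact Or.inl (by rwa [is_inv_inv])

lemma word_inv {X : Set S} :
    ∀ (l : List S) (x : S), x ∈ X ∪ Inv.inv '' X → (∀ y ∈ l, y ∈ X ∪ Inv.inv '' X) →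
    ∃ (z : S) (m : List S), (z ∈ X ∪ Inv.inv '' X) ∧ (∀ y ∈ m, y ∈ X ∪ Inv.inv '' X) ∧
      (l.foldl (· * ·) x)⁻¹ = m.foldl (· * ·) z := by
  intro l
  induction l using List.reverseRecOn with
  | nil =>
      intro x hx _
      exact ⟨x⁻¹, [], mem_Xi_inv hx, fun y hy => absurd hy List.not_mem_nil, rfl⟩
  | append_singleton l y ih =>
      intro x hx hl
      obtain ⟨z, m, hz, hm, heq⟩ := ih x hx (fun w hw => hl w (by simp [hw]))
      refine ⟨y⁻¹, z :: m, mem_Xi_inv (hl y (by simp)), ?_, ?_⟩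
      · intro w hw
        rcases List.mem_cons.1 hw with rfl | hw
        · exact hz
        · exact hm w hw
      · rw [List.foldl_append]
        show ((l.foldl (· * ·) x) * y)⁻¹ = m.foldl (· * ·) (y⁻¹ * z)
        rw [is_mul_inv_rev, heq]
        exact (foldl_mul_assoc m y⁻¹ z).symm

lemma word_of_invGen {X : Set S} {t : S} (h : InvGen X t) :
    ∃ (x : S) (l : List S), (x ∈ X ∪ Inv.inv '' X) ∧ (∀ y ∈ l, y ∈ X ∪ Inv.inv '' X) ∧
      t = l.foldl (· * ·) x := by
  induction h with
  | base hx => exact ⟨_, [], Or.inl hx, fun y hy => absurd hy List.not_mem_nil, rfl⟩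
  | mul ha hb iha ihb =>
      obtain ⟨x, la, hx, hla, rfl⟩ := iha
      obtain ⟨y, lb, hy, hlb, rfl⟩ := ihb
      refine ⟨x, la ++ y :: lb, hx, ?_, (foldl_append_mul x y la lb).symm⟩
      intro w hw
      rcases List.mem_append.1 hw with h | h
      · exact hla w h
      · rcases List.mem_cons.1 h with rfl | h
        · exact hy
        · exact hlb w h
  | inv ha iha =>
      obtain ⟨x, l, hx, hl, rfl⟩ := iha
      obtain ⟨z, m, hz, hm, heq⟩ := word_inv l x hx hl
      exact ⟨z, m, hz, hm, heq⟩

end Words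

/-- Chains: products `g₁ * g₂ * ⋯ * gₖ` of elements of `G` all of whose
partial products lie in `J`. -/
inductive Chain {S : Type*} [Mul S] (J G : Set S) : S → Prop
  | base {g : S} : g ∈ G → Chain J G g
  | step {u g : S} : Chain J G u → g ∈ G → u * g ∈ J → Chain J G (u * g)

lemma chain_mem {S : Type*} [Mul S] {J G : Set S} (hG : G ⊆ J) {u : S}
    (h : Chain J G u) : u ∈ J := by
  induction h with
  | base hg => exact hG hg
  | step _ _ hJ _ => exact hJ

lemma chain_invGen {S : Type*} [Mul S] [Inv S] {J G : Set S} {u : S}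
    (h : Chain J G u) : InvGen G u := by
  induction h with
  | base hg => exact .base hg
  | step _ hg _ ih => exact .mul ih (.base hg)

/-- The canonical generating set for `T ∩ J` built from idempotents and
one-step products. -/
def GJ {S : Type*} [InverseSemigroup S] (T X J : Set S) : Set S :=
  {e | e * e = e ∧ e ∈ T ∧ e ∈ J} ∪
  {r | ∃ e x, (e * e = e ∧ e ∈ T) ∧ x ∈ X ∧ r = e * x ∧ r ∈ J}

section ChainLemmas
variable {S : Type*} [InverseSemigroup S]

lemma GJ_subset_J {T X J : Set S} : GJ T X J ⊆ J := by
  rintro r (⟨_, _, hJ⟩ | ⟨e, x, _, _, rfl, hJ⟩) <;> exact hJ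

lemma GJ_subset {T X J : Set S} (hT : IsInvSub T) (hX : X ⊆ T) :
    GJ T X J ⊆ T ∩ J := by
  rintro r (⟨_, hT', hJ⟩ | ⟨e, x, ⟨_, heT⟩, hx, rfl, hJ⟩)
  · exact ⟨hT', hJ⟩
  · exact ⟨hT.1 e heT x (hX hx), hJ⟩

lemma GJ_finite {T X J : Set S} (hE : {e : S | e * e = e}.Finite) (hX : X.Finite) :
    (GJ T X J).Finite := by
  refine Set.Finite.union ?_ ?_
  · exact hE.subset fun e he => he.1
  · refine Set.Finite.subset ((hE.prod hX).image fun p => p.1 * p.2) ?_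
    rintro r ⟨e, x, ⟨he, _⟩, hx, rfl, _⟩
    exact ⟨(e, x), ⟨he, hx⟩, rfl⟩

lemma chain_ext {T X : Set S} (hT : IsInvSub T) (a : S) :
    ∀ (l : List S), (∀ y ∈ l, y ∈ X) → (∀ y ∈ l, y ∈ T) →
    ∀ u : S, u ∈ T → u ∈ Jcl a → Chain (Jcl a) (GJ T X (Jcl a)) u →
    l.foldl (· * ·) u ∈ Jcl a → Chain (Jcl a) (GJ T X (Jcl a)) (l.foldl (· * ·) u) := by
  intro l
  induction l with
  | nil => intro _ _ u _ _ hc _; exact hc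
  | cons x l ih =>
      intro hlX hlT u huT huJ hc hfold
      have hxX : x ∈ X := hlX x List.mem_cons_self
      have hxT : x ∈ T := hlT x List.mem_cons_self
      simp only [List.foldl_cons] at hfold ⊢
      have huxJ : u * x ∈ Jcl a :=
        mem_Jcl_sandwich huJ hfold (Idl_subset (foldl_mem_Idl l (u * x)))
          (Idl_subset (mul_mem_Idl_left u x))
      have hrx : u * ((u⁻¹ * u) * x) = u * x := by
        rw [← mul_assoc, ← mul_assoc, is_mim]
      have hIdl : Idl (u * x) = Idl ((u⁻¹ * u) * x) := by
        refine Set.Subset.antisymm (Idl_subset ?_) (Idl_subset ?_)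
        · rw [← hrx]; exact mul_mem_Idl_right u ((u⁻¹ * u) * x)
        · rw [mul_assoc]; exact mul_mem_Idl_right u⁻¹ (u * x)
      have hrJ : (u⁻¹ * u) * x ∈ Jcl a := mem_Jcl_of_Idl_eq huxJ hIdl
      have hrG : (u⁻¹ * u) * x ∈ GJ T X (Jcl a) :=
        Or.inr ⟨u⁻¹ * u, x, ⟨idem_inv_mul u, hT.1 u⁻¹ (hT.2 u huT) u huT⟩, hxX, rfl, hrJ⟩
      have hc' : Chain (Jcl a) (GJ T X (Jcl a)) (u * x) := by
        rw [← hrx]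
        exact Chain.step hc hrG (by rwa [hrx])
      exact ih (fun y hy => hlX y (List.mem_cons_of_mem _ hy))
        (fun y hy => hlT y (List.mem_cons_of_mem _ hy))
        (u * x) (hT.1 u huT x hxT) huxJ hc' hfold

lemma chain_of_mem {T : Set S} (hT : IsInvSub T) {X0 : Set S} (hX0 : X0 ⊆ T)
    {a t : S} (ht : t ∈ T) (htJ : t ∈ Jcl a) (hw : InvGen X0 t) :
    Chain (Jcl a) (GJ T (X0 ∪ Inv.inv '' X0) (Jcl a)) t := by
  obtain ⟨x, l, hx, hl, heq⟩ := word_of_invGen hw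
  have hXiT : X0 ∪ Inv.inv '' X0 ⊆ T := by
    rintro y (hy | ⟨z, hz, rfl⟩)
    · exact hX0 hy
    · exact hT.2 z (hX0 hz)
  have heT : t * t⁻¹ ∈ T := hT.1 t ht t⁻¹ (hT.2 t ht)
  have heJ : t * t⁻¹ ∈ Jcl a := mem_Jcl_of_Idl_eq htJ (jrel_mul_inv t)
  have hct : (x :: l).foldl (· * ·) (t * t⁻¹) = t := by
    show l.foldl (· * ·) ((t * t⁻¹) * x) = t
    rw [foldl_mul_assoc l (t * t⁻¹) x, ← heq, is_mim]
  have hres := chain_ext hT a (x :: l)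
    (by intro y hy; rcases List.mem_cons.1 hy with rfl | hy; exacts [hx, hl y hy])
    (by intro y hy; rcases List.mem_cons.1 hy with rfl | hy
        exacts [hXiT hx, hXiT (hl y hy)])
    (t * t⁻¹) heT heJ (Chain.base (Or.inl ⟨idem_mul_inv t, heT, heJ⟩))
    (by rw [hct]; exact htJ)
  rwa [hct] at hres

end ChainLemmas



section PFLemmas
variable {S : Type*} [InverseSemigroup S] {J : Set S}

lemma PF_none_mul {p : PF J} (hp : p = none) (q : PF J) : p * q = none := by
  subst hp; rfl

lemma PF_mul_none (p : PF J) {q : PF J} (hq : q = none) : p * q = none := by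
  subst hq; cases p <;> rfl

lemma PF_mul_pos {p q : PF J} {x y : ↥J} (hp : p = some x) (hq : q = some y)
    (h : (x : S) * y ∈ J) : p * q = some ⟨(x : S) * y, h⟩ := by
  subst hp; subst hq; exact dif_pos h

lemma PF_mul_neg {p q : PF J} {x y : ↥J} (hp : p = some x) (hq : q = some y)
    (h : ¬ (x : S) * y ∈ J) : p * q = none := by
  subst hp; subst hq; exact dif_neg h

lemma PF_inv_none {p : PF J} (hp : p = none) : p⁻¹ = none := by subst hp; rfl

lemma PF_inv_pos {p : PF J} {x : ↥J} (hp : p = some x) (h : (x : S)⁻¹ ∈ J) :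
    p⁻¹ = some ⟨(x : S)⁻¹, h⟩ := by subst hp; exact dif_pos h

lemma PF_inv_neg {p : PF J} {x : ↥J} (hp : p = some x) (h : ¬ (x : S)⁻¹ ∈ J) :
    p⁻¹ = none := by subst hp; exact dif_neg h

lemma TJ_isInvSub {T : Set S} (hT : IsInvSub T) : IsInvSub (TJ J T) := by
  constructor
  · rintro p (rfl | ⟨x, hxT, rfl⟩) q hq
    · rw [PF_none_mul rfl q]; exact Or.inl rfl
    · rcases hq with rfl | ⟨y, hyT, rfl⟩
      · exact Or.inl (PF_mul_none _ rfl)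
      · by_cases h : (x : S) * y ∈ J
        · rw [PF_mul_pos rfl rfl h]
          exact Or.inr ⟨⟨_, h⟩, hT.1 _ hxT _ hyT, rfl⟩
        · rw [PF_mul_neg rfl rfl h]; exact Or.inl rfl
  · rintro p (rfl | ⟨x, hxT, rfl⟩)
    · rw [PF_inv_none rfl]; exact Or.inl rfl
    · by_cases h : (x : S)⁻¹ ∈ J
      · rw [PF_inv_pos rfl h]
        exact Or.inr ⟨⟨_, h⟩, hT.2 _ hxT, rfl⟩
      · rw [PF_inv_neg rfl h]; exact Or.inl rfl

lemma chain_to_PF {G : Set S} (hG : G ⊆ J) {u : S} (h : Chain J G u) :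
    ∀ hu : u ∈ J, InvGen (S := PF J)
      (insert (none : Option ↥J)
        ((fun x : ↥J => (some x : Option ↥J)) '' {x : ↥J | (x : S) ∈ G}) : Set (PF J))
      (some ⟨u, hu⟩ : Option ↥J) := by
  induction h with
  | base hg =>
      intro hu
      exact .base (Set.mem_insert_iff.2 (Or.inr ⟨⟨_, hu⟩, hg, rfl⟩))
  | @step u g hcu hg hug ih =>
      intro huJ
      have huJ' := chain_mem hG hcu
      have hgJ : g ∈ J := hG hg
      have h2 : InvGen (S := PF J)
          (insert (none : Option ↥J)
            ((fun x : ↥J => (some x : Option ↥J)) '' {x : ↥J | (x : S) ∈ G}))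
          (some ⟨g, hgJ⟩ : Option ↥J) :=
        .base (Set.mem_insert_iff.2 (Or.inr ⟨⟨_, hgJ⟩, hg, rfl⟩))
      have hmul := InvGen.mul (ih huJ') h2
      rwa [PF_mul_pos (x := ⟨u, huJ'⟩) (y := ⟨g, hgJ⟩) rfl rfl hug] at hmul

lemma PF_invGen_extract {X' : Set (PF J)} {p : PF J} (h : InvGen X' p) :
    ∀ x : ↥J, p = some x →
      InvGen (Subtype.val '' {y : ↥J | (some y : Option ↥J) ∈ X'}) ((x : S)) := by
  induction h with
  | base hp =>
      intro x hx
      rw [hx] at hp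
      exact .base ⟨x, hp, rfl⟩
  | @mul a b ha hb iha ihb =>
      intro x hx
      cases a with
      | none => rw [PF_none_mul rfl b] at hx; cases hx
      | some y =>
        cases b with
        | none => have h0 := (PF_mul_none _ rfl).symm.trans hx; cases h0
        | some z =>
            by_cases h : (y : S) * z ∈ J
            · rw [PF_mul_pos rfl rfl h] at hx
              cases hx
              exact .mul (iha y rfl) (ihb z rfl)
            · rw [PF_mul_neg rfl rfl h] at hx; cases hx
  | @inv a ha iha =>
      intro x hx
      cases a with
      | none => rw [PF_inv_none rfl] at hx; cases hx
      | some y =>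
          by_cases h : (y : S)⁻¹ ∈ J
          · rw [PF_inv_pos rfl h] at hx
            cases hx
            exact .inv (iha y rfl)
          · rw [PF_inv_neg rfl h] at hx; cases hx

end PFLemmas


theorem stmt_3 {S : Type*} [InverseSemigroup S]
    (hE : {e : S | e * e = e}.Finite) (T : Set S) (hT : IsInvSub T) :
    InvFG T ↔ ∀ a : S, (T ∩ Jcl a).Nonempty →
      (IsInvSub (Jcl a) → InvFG (T ∩ Jcl a)) ∧
      (¬ IsInvSub (Jcl a) → InvFG (TJ (Jcl a) T)) := by
  classical
  constructor
  · -- forward direction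
    rintro ⟨X0, hX0T, hGenT⟩ a _
    have hXiT : (↑X0 ∪ Inv.inv '' ↑X0 : Set S) ⊆ T := by
      rintro y (hy | ⟨z, hz, rfl⟩)
      · exact hX0T hy
      · exact hT.2 z (hX0T hz)
    have hXiFin : (↑X0 ∪ Inv.inv '' ↑X0 : Set S).Finite :=
      X0.finite_toSet.union (X0.finite_toSet.image _)
    have hGfin : (GJ T (↑X0 ∪ Inv.inv '' ↑X0) (Jcl a)).Finite := GJ_finite hE hXiFin
    have hGsub : GJ T (↑X0 ∪ Inv.inv '' ↑X0) (Jcl a) ⊆ T ∩ Jcl a := GJ_subset hT hXiT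
    have hchain : ∀ t ∈ T ∩ Jcl a,
        Chain (Jcl a) (GJ T (↑X0 ∪ Inv.inv '' ↑X0) (Jcl a)) t := by
      rintro t ⟨htT, htJ⟩
      have hw : InvGen (↑X0 : Set S) t := by
        have h' := htT; rw [hGenT] at h'; exact h'
      exact chain_of_mem hT hX0T htT htJ hw
    constructor
    · intro hJsub
      refine ⟨hGfin.toFinset, ?_, ?_⟩
      · rw [hGfin.coe_toFinset]; exact hGsub
      · rw [hGfin.coe_toFinset]
        ext t
        constructor
        · intro ht
          exact chain_invGen (hchain t ht)
        · intro ht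
          have hsub' : IsInvSub (T ∩ Jcl a) :=
            ⟨fun u hu v hv => ⟨hT.1 u hu.1 v hv.1, hJsub.1 u hu.2 v hv.2⟩,
             fun u hu => ⟨hT.2 u hu.1, hJsub.2 u hu.2⟩⟩
          exact invGen_mem hsub' hGsub ht
    · intro _
      have hG'fin : (insert (none : Option ↥(Jcl a))
          ((fun x : ↥(Jcl a) => (some x : Option ↥(Jcl a))) ''
            {x : ↥(Jcl a) | (x : S) ∈ GJ T (↑X0 ∪ Inv.inv '' ↑X0) (Jcl a)}) :
              Set (PF (Jcl a))).Finite :=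
        Set.Finite.insert _ ((hGfin.preimage Subtype.coe_injective.injOn).image _)
      have hG'sub : (insert (none : Option ↥(Jcl a))
          ((fun x : ↥(Jcl a) => (some x : Option ↥(Jcl a))) ''
            {x : ↥(Jcl a) | (x : S) ∈ GJ T (↑X0 ∪ Inv.inv '' ↑X0) (Jcl a)}) :
              Set (PF (Jcl a))) ⊆ TJ (Jcl a) T := by
        rintro p (rfl | ⟨x, hx, rfl⟩)
        · exact Or.inl rfl
        · exact Or.inr ⟨x, (hGsub hx).1, rfl⟩
      refine ⟨hG'fin.toFinset, ?_, ?_⟩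
      · rw [hG'fin.coe_toFinset]; exact hG'sub
      · rw [hG'fin.coe_toFinset]
        ext p
        constructor
        · rintro (rfl | ⟨x, hxT, rfl⟩)
          · exact .base (Set.mem_insert_iff.2 (Or.inl rfl))
          · have hc := hchain (↑x) ⟨hxT, x.2⟩
            have hres := chain_to_PF GJ_subset_J hc x.2
            exact hres
        · intro hp
          exact invGen_mem (TJ_isInvSub hT) hG'sub hp
  · -- backward direction
    intro H
    have hE'fin : {e : S | e * e = e ∧ (T ∩ Jcl e).Nonempty}.Finite :=
      hE.subset fun e he => he.1
    have key : ∀ e ∈ {e : S | e * e = e ∧ (T ∩ Jcl e).Nonempty},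
        ∃ Y : Set S, Y.Finite ∧ Y ⊆ T ∧ ∀ t ∈ T ∩ Jcl e, InvGen Y t := by
      rintro e ⟨hee, hne⟩
      obtain ⟨h1, h2⟩ := H e hne
      by_cases hsub : IsInvSub (Jcl e)
      · obtain ⟨X, hXsub, hXgen⟩ := h1 hsub
        refine ⟨↑X, X.finite_toSet, fun y hy => (hXsub hy).1, fun t ht => ?_⟩
        rw [hXgen] at ht
        exact ht
      · obtain ⟨X, hXsub, hXgen⟩ := h2 hsub
        refine ⟨Subtype.val ''
          {y : ↥(Jcl e) | (some y : Option ↥(Jcl e)) ∈ (↑X : Set (PF (Jcl e)))},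
          ?_, ?_, ?_⟩
        · exact (X.finite_toSet.preimage (Option.some_injective _).injOn).image _
        · rintro _ ⟨y, hy, rfl⟩
          rcases hXsub hy with h | ⟨x, hxT, heq⟩
          · cases h
          · injection heq with h2
            rw [h2]
            exact hxT
        · rintro t ⟨htT, htJ⟩
          have hmem : (some ⟨t, htJ⟩ : Option ↥(Jcl e)) ∈ TJ (Jcl e) T :=
            Or.inr ⟨⟨t, htJ⟩, htT, rfl⟩
          rw [hXgen] at hmem
          exact PF_invGen_extract hmem ⟨t, htJ⟩ rfl
    choose! Y hYfin hYT hYgen using key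
    have hZfin : (⋃ e ∈ {e : S | e * e = e ∧ (T ∩ Jcl e).Nonempty}, Y e).Finite :=
      hE'fin.biUnion hYfin
    have hZT : (⋃ e ∈ {e : S | e * e = e ∧ (T ∩ Jcl e).Nonempty}, Y e) ⊆ T := by
      intro z hz
      rcases Set.mem_iUnion₂.1 hz with ⟨e, he, hze⟩
      exact hYT e he hze
    refine ⟨hZfin.toFinset, ?_, ?_⟩
    · rw [hZfin.coe_toFinset]; exact hZT
    · rw [hZfin.coe_toFinset]
      ext t
      constructor
      · intro htT
        have htJ : t ∈ Jcl (t * t⁻¹) := by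
          rw [← Jcl_congr (jrel_mul_inv t)]
          exact self_mem_Jcl t
        have heE' : t * t⁻¹ ∈ {e : S | e * e = e ∧ (T ∩ Jcl e).Nonempty} :=
          ⟨idem_mul_inv t, ⟨t, htT, htJ⟩⟩
        exact invGen_mono (Set.subset_biUnion_of_mem heE') (hYgen _ heE' t ⟨htT, htJ⟩)
      · intro ht
        exact invGen_mem hT hZT ht
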